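/- arXiv:1706.01359 — 4 statements merged into one kernel-verified Lean document; each statement's English description precedes it below -/
import Mathlib

section
/- Let 0 → F → G → H → 0 be a short exact sequence of locally free sheaves of O_X-modules with H invertible (of rank 1). Then there is a short exact sequence 0 → ∧²F → ∧²G → F ⊗ H → 0, where the surjection ∧²G → F ⊗ H is induced by g₁ ∧ g₂ ↦ π(g₁) ⊗ g₂ − π(g₂) ⊗ g₁ (identifying H ⊗ F ≅ F ⊗ H and using that π(f) = 0 for f in the image of F). -/
open TensorProduct ExteriorAlgebra


set_option maxHeartbeats 800000 in
theorem aux_rank_one {A M N : Type*} [CommRing A] [IsLocalRing A]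
    [AddCommGroup M] [Module A M] [AddCommGroup N] [Module A N]
    [Module.Free A M] [Module.Finite A M]
    (E2 : (M ⊗[A] N) ≃ₗ[A] A) : Module.finrank A M = 1 := by
  let κ := IsLocalRing.ResidueField A
  let e3a : (κ ⊗[A] (M ⊗[A] N)) ≃ₗ[κ] ((κ ⊗[A] M) ⊗[κ] (κ ⊗[A] N)) :=
    TensorProduct.AlgebraTensorModule.distribBaseChange A κ M N
  let e3b : (κ ⊗[A] (M ⊗[A] N)) ≃ₗ[κ] (κ ⊗[A] A) :=
    TensorProduct.AlgebraTensorModule.congr (LinearEquiv.refl κ κ) E2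
  let e3c : (κ ⊗[A] A) ≃ₗ[κ] κ := TensorProduct.AlgebraTensorModule.rid A κ κ
  have h3 : Module.finrank κ ((κ ⊗[A] M) ⊗[κ] (κ ⊗[A] N)) = Module.finrank κ κ :=
    (e3a.symm ≪≫ₗ e3b ≪≫ₗ e3c).finrank_eq
  rw [Module.finrank_self, Module.finrank_tensorProduct,
    Module.finrank_baseChange] at h3
  exact Nat.eq_one_of_mul_eq_one_right h3

set_option maxHeartbeats 1000000 in
theorem span_sq_eq_top {R H : Type*} [CommRing R] [AddCommGroup H] [Module R H]
    [Module.Finite R H] [Module.Projective R H]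
    (hinv : ∃ (H' : Type) (_ : AddCommGroup H') (_ : Module R H'),
      Nonempty (TensorProduct R H H' ≃ₗ[R] R)) :
    Submodule.span R {x : TensorProduct R H H | ∃ a : H, a ⊗ₜ[R] a = x} = ⊤ := by
  obtain ⟨H', _, _, ⟨e₀⟩⟩ := hinv
  apply Submodule.eq_top_of_localization_maximal
    (fun P _ => Localization.AtPrime P)
    (fun P _ => LocalizedModule P.primeCompl (TensorProduct R H H))
    (fun P _ => LocalizedModule.mkLinearMap P.primeCompl (TensorProduct R H H))
  intro P hP
  rw [Submodule.localized'_span]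
  set S : Submonoid R := P.primeCompl with hS
  set A : Type _ := Localization.AtPrime P with hA
  -- instances for A ⊗[R] H
  haveI : Module.FinitePresentation A (A ⊗[R] H) :=
    Module.finitePresentation_of_projective _ _
  haveI : Module.Free A (A ⊗[R] H) := Module.free_of_flat_of_isLocalRing
  -- the base change equivalences
  let bc2 : A ⊗[R] (TensorProduct R H H) ≃ₗ[A] LocalizedModule S (TensorProduct R H H) :=
    (IsLocalizedModule.isBaseChange S A
      (LocalizedModule.mkLinearMap S (TensorProduct R H H))).equiv
  let dist := TensorProduct.AlgebraTensorModule.distribBaseChange R A H H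
  let Φ : LocalizedModule S (TensorProduct R H H) ≃ₗ[A] (A ⊗[R] H) ⊗[A] (A ⊗[R] H) :=
    bc2.symm ≪≫ₗ dist
  have hΦ : ∀ a b : H,
      Φ (LocalizedModule.mkLinearMap S (TensorProduct R H H) (a ⊗ₜ[R] b))
        = ((1 : A) ⊗ₜ[R] a) ⊗ₜ[A] ((1 : A) ⊗ₜ[R] b) := by
    intro a b
    have h1 : bc2 ((1:A) ⊗ₜ[R] (a ⊗ₜ[R] b))
        = LocalizedModule.mkLinearMap S (TensorProduct R H H) (a ⊗ₜ[R] b) := by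
      rw [IsBaseChange.equiv_tmul, one_smul]
    rw [← h1]
    show dist (bc2.symm (bc2 _)) = _
    rw [LinearEquiv.symm_apply_apply]
    show TensorProduct.AlgebraTensorModule.distribBaseChange R A H H _ = _
    rw [TensorProduct.AlgebraTensorModule.distribBaseChange, LinearEquiv.symm_apply_eq]
    simp only [LinearEquiv.trans_apply,
      TensorProduct.AlgebraTensorModule.cancelBaseChange_tmul,
      TensorProduct.AlgebraTensorModule.assoc_tmul, one_smul]
  -- rank computation : A ⊗[R] H is free of rank 1
  have hrank : Module.finrank A (A ⊗[R] H) = 1 := by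
    refine aux_rank_one (N := A ⊗[R] H')
      ((TensorProduct.AlgebraTensorModule.distribBaseChange R A H H').symm ≪≫ₗ
        TensorProduct.AlgebraTensorModule.congr (LinearEquiv.refl A A) e₀ ≪≫ₗ
        TensorProduct.AlgebraTensorModule.rid R A A)
  -- every element of A ⊗[R] H has the form c • (1 ⊗ a)
  have hrep : ∀ x : A ⊗[R] H, ∃ (c : A) (a : H), x = c • ((1 : A) ⊗ₜ[R] a) := by
    intro x
    let bcH : A ⊗[R] H ≃ₗ[A] LocalizedModule S H :=
      (IsLocalizedModule.isBaseChange S A (LocalizedModule.mkLinearMap S H)).equiv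
    obtain ⟨a, t, hat⟩ : ∃ (a : H) (t : S), LocalizedModule.mk a t = bcH x := by
      induction (bcH x) using LocalizedModule.induction_on with
      | h a t => exact ⟨a, t, rfl⟩
    have h1 : bcH ((1 : A) ⊗ₜ[R] a) = LocalizedModule.mk a 1 := by
      rw [IsBaseChange.equiv_tmul, one_smul]; rfl
    refine ⟨Localization.mk 1 t, a, ?_⟩
    apply bcH.injective
    rw [map_smul, h1, ← hat]
    rw [LocalizedModule.mk_smul_mk, one_smul, mul_one]
  -- the basis vector
  let b := Module.finBasisOfFinrankEq A (A ⊗[R] H) hrank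
  have hb : ∀ m : A ⊗[R] H, m = (b.repr m 0) • b 0 := by
    intro m
    conv_lhs => rw [← b.sum_repr m]
    rw [Fin.sum_univ_one]
  have htop : Submodule.span A {(b 0) ⊗ₜ[A] (b 0)} = ⊤ := by
    rw [eq_top_iff, ← TensorProduct.span_tmul_eq_top A (A ⊗[R] H) (A ⊗[R] H),
      Submodule.span_le]
    rintro _ ⟨m, n, rfl⟩
    rw [hb m, hb n, TensorProduct.smul_tmul_smul]
    exact Submodule.smul_mem _ _ (Submodule.mem_span_singleton_self _)
  -- conclude
  rw [eq_top_iff]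
  rintro z -
  have hz : Φ z ∈ Submodule.span A {(b 0) ⊗ₜ[A] (b 0)} := htop ▸ Submodule.mem_top
  obtain ⟨d, hd⟩ := Submodule.mem_span_singleton.mp hz
  obtain ⟨c, a, hca⟩ := hrep (b 0)
  have : z = (d * c * c) • (LocalizedModule.mkLinearMap S (TensorProduct R H H)
      (a ⊗ₜ[R] a)) := by
    apply Φ.injective
    rw [map_smul, hΦ, ← hd, hca, TensorProduct.smul_tmul_smul, smul_smul, mul_assoc]
  rw [this]
  exact Submodule.smul_mem _ _ (Submodule.subset_span ⟨a ⊗ₜ[R] a, ⟨a, rfl⟩, rfl⟩)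

theorem aux_ring {A : Type*} [Ring A] (x y a b : A) (h1 : b * a = 0) (h2 : b * x = -(x * b)) :
    (x - a) * (y - b) + (a * (y - b) - b * (x - a)) = x * y := by
  have e1 : (x - a) * (y - b) + (a * (y - b) - b * (x - a))
      = x * y - x * b - b * x + b * a := by noncomm_ring
  rw [e1, h1, h2]
  abel

open ExteriorAlgebra

set_option maxHeartbeats 1600000 in
/-- Let `0 → F →ι G →π H → 0` be a short exact sequence of locally free
sheaves of `O_X`-modules with `H` invertible (of rank 1).  Then there is a short exact
sequence `0 → ⋀²F → ⋀²G → F ⊗ H → 0`, where the surjection `⋀²G → F ⊗ H` is induced by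
`g₁ ∧ g₂ ↦ π g₁ ⊗ g₂ − π g₂ ⊗ g₁` (identifying `H ⊗ F ≅ F ⊗ H` and using `π ∘ ι = 0`).
(Formalised in the local model: finitely generated projective modules over a commutative
ring, `H` invertible meaning it has a tensor inverse; the compatibility of `φ` with the
formula is expressed after applying `ι ⊗ id : F ⊗ H → G ⊗ H` and the flip `H ⊗ G ≅ G ⊗ H`,
under which `π g₁ ⊗ g₂ − π g₂ ⊗ g₁` corresponds to `g₂ ⊗ π g₁ − g₁ ⊗ π g₂`.) -/
theorem stmt1 {R F G H : Type*} [CommRing R]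
    [AddCommGroup F] [Module R F] [AddCommGroup G] [Module R G]
    [AddCommGroup H] [Module R H]
    [Module.Finite R F] [Module.Projective R F]
    [Module.Finite R G] [Module.Projective R G]
    [Module.Finite R H] [Module.Projective R H]
    (hinv : ∃ (H' : Type) (_ : AddCommGroup H') (_ : Module R H'),
      Nonempty (TensorProduct R H H' ≃ₗ[R] R))
    (ι : F →ₗ[R] G) (π : G →ₗ[R] H)
    (hι : Function.Injective ι) (hπ : Function.Surjective π)
    (hexact : LinearMap.range ι = LinearMap.ker π)
    (hmemG : ∀ v : Fin 2 → G, ιMulti R 2 v ∈ ⋀[R]^2 G)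
    (hmap : ∀ x ∈ ⋀[R]^2 F, ExteriorAlgebra.map ι x ∈ ⋀[R]^2 G) :
    Function.Injective ((ExteriorAlgebra.map ι).toLinearMap.restrict hmap) ∧
    ∃ φ : (⋀[R]^2 G) →ₗ[R] TensorProduct R F H,
      Function.Surjective φ ∧
      LinearMap.range ((ExteriorAlgebra.map ι).toLinearMap.restrict hmap) =
        LinearMap.ker φ ∧
      ∀ g₁ g₂ : G,
        (TensorProduct.map ι LinearMap.id) (φ ⟨ιMulti R 2 ![g₁, g₂], hmemG ![g₁, g₂]⟩) =
          g₂ ⊗ₜ[R] π g₁ - g₁ ⊗ₜ[R] π g₂ := by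
  classical
  have hsq := span_sq_eq_top hinv
  -- commutativity of tensors in H ⊗ H
  have hcomm : ∀ a b : H, a ⊗ₜ[R] b = b ⊗ₜ[R] a := by
    have h : (TensorProduct.comm R H H).toLinearMap = LinearMap.id :=
      LinearMap.ext_on hsq (by rintro x ⟨a, rfl⟩; simp)
    intro a b
    have h2 := DFunLike.congr_fun h (a ⊗ₜ[R] b)
    simpa using h2.symm
  -- a section of π
  obtain ⟨s, hs⟩ := Module.projective_lifting_property π LinearMap.id hπ
  have hπs : ∀ h, π (s h) = h := fun h => DFunLike.congr_fun hs h
  have hπι : ∀ f, π (ι f) = 0 := fun f => by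
    have hf : ι f ∈ LinearMap.ker π := hexact ▸ LinearMap.mem_range_self ι f
    exact LinearMap.mem_ker.mp hf
  -- the retraction r : G →ₗ F
  let eF : F ≃ₗ[R] LinearMap.range ι := LinearEquiv.ofInjective ι hι
  have hq : ∀ g : G, ((LinearMap.id : G →ₗ[R] G) - s ∘ₗ π) g ∈ LinearMap.range ι := by
    intro g; rw [hexact, LinearMap.mem_ker]; simp [hπs]
  let r : G →ₗ[R] F :=
    eF.symm.toLinearMap ∘ₗ
      ((LinearMap.id : G →ₗ[R] G) - s ∘ₗ π).codRestrict (LinearMap.range ι) hq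
  have hεF : ∀ y : LinearMap.range ι, ι (eF.symm y) = (y : G) := by
    intro y
    have h1 : ((eF (eF.symm y)) : G) = ι (eF.symm y) :=
      LinearEquiv.ofInjective_apply ι (eF.symm y)
    rw [← h1, LinearEquiv.apply_symm_apply]
  have hιr : ∀ g, ι (r g) = g - s (π g) := by
    intro g
    show ι (eF.symm _) = _
    rw [hεF]
    simp [LinearMap.codRestrict_apply]
  have hrι : ∀ f, r (ι f) = f := fun f => hι (by rw [hιr, hπι, map_zero, sub_zero])
  have hrs : ∀ h, r (s h) = 0 := fun h => hι (by rw [hιr, hπs, sub_self, map_zero])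
  -- the bilinear and alternating maps
  let φbil : G →ₗ[R] G →ₗ[R] TensorProduct R F H := LinearMap.mk₂ R
    (fun g₁ g₂ => r g₂ ⊗ₜ[R] π g₁ - r g₁ ⊗ₜ[R] π g₂)
    (fun m₁ m₂ n => by simp only [map_add, add_tmul, tmul_add]; abel)
    (fun c m n => by simp only [map_smul, smul_tmul', tmul_smul, smul_sub])
    (fun m n₁ n₂ => by simp only [map_add, add_tmul, tmul_add]; abel)
    (fun c m n => by simp only [map_smul, smul_tmul', tmul_smul, smul_sub])
  let φ₀ : G [⋀^Fin 2]→ₗ[R] TensorProduct R F H :=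
    { toFun := fun v => φbil (v 0) (v 1)
      map_update_add' := by
        intro dec v i x y
        fin_cases i <;>
          simp [Function.update_apply, Fin.isValue, map_add, LinearMap.add_apply]
      map_update_smul' := by
        intro dec v i c x
        fin_cases i <;>
          simp [Function.update_apply, Fin.isValue, map_smul, LinearMap.smul_apply]
      map_eq_zero_of_eq' := by
        intro v i j hij hne
        fin_cases i <;> fin_cases j
        · exact absurd rfl hne
        · show φbil (v 0) (v 1) = 0
          rw [show v 0 = v 1 from hij]
          simp [φbil]
        · show φbil (v 0) (v 1) = 0
          rw [show v 0 = v 1 from hij.symm]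
          simp [φbil]
        · exact absurd rfl hne }
  let fA : ∀ i : ℕ, G [⋀^Fin i]→ₗ[R] TensorProduct R F H := fun i =>
    match i with
    | 2 => φ₀
    | _ => 0
  let φ' : ExteriorAlgebra R G →ₗ[R] TensorProduct R F H := ExteriorAlgebra.liftAlternating fA
  let φ : (⋀[R]^2 G) →ₗ[R] TensorProduct R F H := φ' ∘ₗ (Submodule.subtype _)
  have hφ_on : ∀ v : Fin 2 → G,
      φ' (ιMulti R 2 v) = r (v 1) ⊗ₜ[R] π (v 0) - r (v 0) ⊗ₜ[R] π (v 1) := by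
    intro v
    show ExteriorAlgebra.liftAlternating fA (ιMulti R 2 v) = _
    rw [ExteriorAlgebra.liftAlternating_apply_ιMulti]
    rfl
  -- product form of ιMulti for 2 vectors
  have hmul2 : ∀ v : Fin 2 → G,
      ιMulti R 2 v = ExteriorAlgebra.ι R (v 0) * ExteriorAlgebra.ι R (v 1) := by
    intro v
    rw [ExteriorAlgebra.ιMulti_succ_apply, ExteriorAlgebra.ιMulti_succ_apply,
      ExteriorAlgebra.ιMulti_zero_apply, mul_one]
    rfl
  -- the squares of sections multiply to zero
  have hB : ∀ h₁ h₂ : H, ExteriorAlgebra.ι R (s h₁) * ExteriorAlgebra.ι R (s h₂)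
      = (0 : ExteriorAlgebra R G) := by
    let Ψ : TensorProduct R H H →ₗ[R] ExteriorAlgebra R G := TensorProduct.lift
      (LinearMap.mk₂ R
        (fun h₁ h₂ => ExteriorAlgebra.ι R (s h₁) * ExteriorAlgebra.ι R (s h₂))
        (fun m₁ m₂ n => by simp only [map_add, add_mul])
        (fun c m n => by simp only [map_smul, smul_mul_assoc])
        (fun m n₁ n₂ => by simp only [map_add, mul_add])
        (fun c m n => by simp only [map_smul, mul_smul_comm]))
    have hΨ : Ψ = 0 := by
      apply LinearMap.ext_on hsq
      rintro x ⟨a, rfl⟩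
      simp [Ψ, TensorProduct.lift.tmul, ExteriorAlgebra.ι_sq_zero]
    intro h₁ h₂
    have h3 := DFunLike.congr_fun hΨ (h₁ ⊗ₜ[R] h₂)
    simpa [Ψ, TensorProduct.lift.tmul] using h3
  -- anticommutativity
  have hanti : ∀ x y : G, ExteriorAlgebra.ι R y * ExteriorAlgebra.ι R x
      = -(ExteriorAlgebra.ι R x * ExteriorAlgebra.ι R y) := by
    intro x y
    have h0 := ExteriorAlgebra.ι_sq_zero (R := R) (x + y)
    rw [map_add, add_mul, mul_add, mul_add, ExteriorAlgebra.ι_sq_zero,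
      ExteriorAlgebra.ι_sq_zero, zero_add, add_zero] at h0
    exact eq_neg_of_add_eq_zero_right h0
  -- Θ : F ⊗ H → ExteriorAlgebra G
  let Θ : TensorProduct R F H →ₗ[R] ExteriorAlgebra R G := TensorProduct.lift
    (LinearMap.mk₂ R
      (fun f h => ExteriorAlgebra.ι R (s h) * ExteriorAlgebra.ι R (ι f))
      (fun m₁ m₂ n => by simp only [map_add, mul_add])
      (fun c m n => by simp only [map_smul, mul_smul_comm])
      (fun m n₁ n₂ => by simp only [map_add, add_mul])
      (fun c m n => by simp only [map_smul, smul_mul_assoc]))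
  -- the key identity on ⋀² G
  have hkey : ∀ w ∈ ⋀[R]^2 G,
      w = ExteriorAlgebra.map ι (ExteriorAlgebra.map r w) + Θ (φ' w) := by
    intro w hw
    rw [← ExteriorAlgebra.ιMulti_span_fixedDegree] at hw
    induction hw using Submodule.span_induction with
    | mem x hx =>
      obtain ⟨v, rfl⟩ := hx
      have h1 : ExteriorAlgebra.map ι (ExteriorAlgebra.map r (ιMulti R 2 v))
          = (ExteriorAlgebra.ι R (v 0) - ExteriorAlgebra.ι R (s (π (v 0)))) *
            (ExteriorAlgebra.ι R (v 1) - ExteriorAlgebra.ι R (s (π (v 1)))) := by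
        rw [hmul2 v, map_mul, map_mul]
        simp only [ExteriorAlgebra.map_apply_ι]
        rw [hιr, hιr, map_sub, map_sub]
      have h2 : Θ (φ' (ιMulti R 2 v))
          = ExteriorAlgebra.ι R (s (π (v 0))) *
              (ExteriorAlgebra.ι R (v 1) - ExteriorAlgebra.ι R (s (π (v 1))))
            - ExteriorAlgebra.ι R (s (π (v 1))) *
              (ExteriorAlgebra.ι R (v 0) - ExteriorAlgebra.ι R (s (π (v 0)))) := by
        rw [hφ_on, map_sub]
        simp only [Θ, TensorProduct.lift.tmul, LinearMap.mk₂_apply]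
        rw [hιr, hιr, map_sub, map_sub]
      rw [h1, h2, hmul2 v]
      exact (aux_ring _ _ _ _ (hB (π (v 1)) (π (v 0))) (hanti (v 0) (s (π (v 1))))).symm
    | zero => simp
    | add a b ha hb iha ihb =>
      simp only [map_add]
      conv_lhs => rw [iha, ihb]
      abel
    | smul c a ha iha =>
      simp only [map_smul]
      conv_lhs => rw [iha]
      rw [smul_add]
  -- map r sends ⋀²G to ⋀²F
  have hmapr : ∀ w ∈ ⋀[R]^2 G, ExteriorAlgebra.map r w ∈ ⋀[R]^2 F := by
    intro w hw
    rw [← ExteriorAlgebra.ιMulti_span_fixedDegree] at hw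
    induction hw using Submodule.span_induction with
    | mem x hx =>
      obtain ⟨v, rfl⟩ := hx
      rw [ExteriorAlgebra.map_apply_ιMulti]
      exact ExteriorAlgebra.ιMulti_range R 2 ⟨_, rfl⟩
    | zero => simp
    | add a b ha hb iha ihb => rw [map_add]; exact Submodule.add_mem _ iha ihb
    | smul c a ha iha => rw [map_smul]; exact Submodule.smul_mem _ _ iha
  -- injectivity
  have h2z : ∀ z : ExteriorAlgebra R F,
      ExteriorAlgebra.map r (ExteriorAlgebra.map ι z) = z := by
    intro z
    rw [← AlgHom.comp_apply, ExteriorAlgebra.map_comp_map,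
      show r ∘ₗ ι = LinearMap.id from LinearMap.ext hrι, ExteriorAlgebra.map_id]
    rfl
  have hinj : Function.Injective ((ExteriorAlgebra.map ι).toLinearMap.restrict hmap) := by
    intro x y hxy
    have h1 : ExteriorAlgebra.map ι (x : ExteriorAlgebra R F)
        = ExteriorAlgebra.map ι (y : ExteriorAlgebra R F) := congrArg Subtype.val hxy
    exact Subtype.ext (by rw [← h2z x.1, h1, h2z])
  -- φ kills the image of ⋀²F
  have hker0 : ∀ w ∈ ⋀[R]^2 F, φ' (ExteriorAlgebra.map ι w) = 0 := by
    intro w hw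
    rw [← ExteriorAlgebra.ιMulti_span_fixedDegree] at hw
    induction hw using Submodule.span_induction with
    | mem x hx =>
      obtain ⟨v, rfl⟩ := hx
      rw [ExteriorAlgebra.map_apply_ιMulti, hφ_on]
      simp [Function.comp, hπι, tmul_zero]
    | zero => simp
    | add a b ha hb iha ihb => rw [map_add, map_add, iha, ihb, add_zero]
    | smul c a ha iha => rw [map_smul, map_smul, iha, smul_zero]
  -- surjectivity
  have hsurj : Function.Surjective φ := by
    rw [← LinearMap.range_eq_top, eq_top_iff, ← TensorProduct.span_tmul_eq_top R F H]
    rw [Submodule.span_le]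
    rintro _ ⟨f, h, rfl⟩
    refine ⟨⟨ιMulti R 2 ![s h, ι f], hmemG _⟩, ?_⟩
    show φ' (ιMulti R 2 ![s h, ι f]) = f ⊗ₜ[R] h
    rw [hφ_on]
    simp [hrι, hrs, hπs, hπι]
  -- exactness
  have hrange : LinearMap.range ((ExteriorAlgebra.map ι).toLinearMap.restrict hmap)
      = LinearMap.ker φ := by
    apply le_antisymm
    · rintro _ ⟨x, rfl⟩
      exact LinearMap.mem_ker.mpr (hker0 x.1 x.2)
    · intro x hx
      have hx0 : φ' (x : ExteriorAlgebra R G) = 0 := LinearMap.mem_ker.mp hx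
      have h1 : (x : ExteriorAlgebra R G)
          = ExteriorAlgebra.map ι (ExteriorAlgebra.map r x.1) := by
        have h3 := hkey x.1 x.2
        rwa [hx0, map_zero, add_zero] at h3
      exact ⟨⟨ExteriorAlgebra.map r x.1, hmapr x.1 x.2⟩, Subtype.ext h1.symm⟩
  refine ⟨hinj, φ, hsurj, hrange, ?_⟩
  intro g₁ g₂
  show TensorProduct.map ι LinearMap.id (φ' (ιMulti R 2 ![g₁, g₂]))
      = g₂ ⊗ₜ[R] π g₁ - g₁ ⊗ₜ[R] π g₂
  rw [hφ_on]
  simp only [Matrix.cons_val_one, Matrix.head_cons, Matrix.cons_val_zero]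
  rw [map_sub]
  simp only [TensorProduct.map_tmul, LinearMap.id_coe, id_eq]
  rw [hιr, hιr]
  have h9 : s (π g₂) ⊗ₜ[R] π g₁ = s (π g₁) ⊗ₜ[R] π g₂ := by
    have h8 := congrArg (TensorProduct.map s (LinearMap.id : H →ₗ[R] H))
      (hcomm (π g₂) (π g₁))
    simpa using h8
  rw [sub_tmul, sub_tmul, h9]
  abel
end

section
/- The transition data of the Π-projective space Pⁿ_Π satisfies the cocycle condition: for the maps defined on chart overlaps by z_{ℓj} = z_{ℓi}/z_{ji} + θ_{ji}θ_{ℓi}/z_{ji}², θ_{ℓj} = θ_{ℓi}/z_{ji} − (z_{ℓi}/z_{ji}²)θ_{ji} (ℓ ≠ i, j) and z_{ij} = 1/z_{ji}, θ_{ij} = −θ_{ji}/z_{ji}², the composition of the change of coordinates from chart i to chart j followed by the change from chart j to chart k equals the change from chart i to chart k, as identities in the Grassmann algebra over the field of rational functions. -/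
set_option synthInstance.maxHeartbeats 1000000
set_option maxHeartbeats 1000000

open MvPolynomial

noncomputable section

variable (n : ℕ)

/-- The field of rational functions in the even chart coordinates. -/
abbrev F13 (n : ℕ) : Type := FractionRing (MvPolynomial (Fin (n + 1)) ℂ)

/-- The Grassmann algebra `ℂ(z₁,…,zₙ) ⊗ Λ[θ₁,…,θₙ]` (realised with one even and one odd
generator for each homogeneous index, the unused ones being harmless). -/
abbrev A13 (n : ℕ) : Type := ExteriorAlgebra (F13 n) (Fin (n + 1) → F13 n)

/-- inclusion of scalars (even elements) -/
noncomputable def c13 (f : F13 n) : A13 n := algebraMap (F13 n) (A13 n) f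

/-- The transition map to chart `j` of the Π-projective space `Pⁿ_Π`: given the
coordinates `(z_{ℓi}, θ_{ℓi})` of chart `i` (with the convention `z_{ii} = 1`,
`θ_{ii} = 0`), it produces the chart-`j` coordinates
`z_{ℓj} = z_{ℓi}/z_{ji} + θ_{ji}θ_{ℓi}/z_{ji}²`,
`θ_{ℓj} = θ_{ℓi}/z_{ji} − (z_{ℓi}/z_{ji}²)θ_{ji}`
(for `ℓ = i` these specialise to `z_{ij} = 1/z_{ji}`, `θ_{ij} = −θ_{ji}/z_{ji}²`). -/
noncomputable def tr13 (j : Fin (n + 1))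
    (v : (Fin (n + 1) → A13 n) × (Fin (n + 1) → A13 n)) :
    (Fin (n + 1) → A13 n) × (Fin (n + 1) → A13 n) :=
  (fun ℓ => v.1 ℓ * Ring.inverse (v.1 j) + v.2 j * v.2 ℓ * Ring.inverse (v.1 j ^ 2),
   fun ℓ => v.2 ℓ * Ring.inverse (v.1 j) - v.1 ℓ * v.2 j * Ring.inverse (v.1 j ^ 2))

/-- generic even coordinates of chart `i` (`z_{ℓi}`, with `z_{ii} = 1`) -/
noncomputable def zgen (i : Fin (n + 1)) : Fin (n + 1) → A13 n :=
  fun ℓ => if ℓ = i then 1 else c13 n (algebraMap (MvPolynomial (Fin (n + 1)) ℂ) (F13 n) (X ℓ))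

/-- generic odd coordinates of chart `i` (`θ_{ℓi}`, with `θ_{ii} = 0`) -/
noncomputable def θgen (i : Fin (n + 1)) : Fin (n + 1) → A13 n :=
  fun ℓ => if ℓ = i then 0 else ExteriorAlgebra.ι (F13 n) (Pi.single ℓ 1)

section Abstract13
variable {F : Type*} [Field F] {A : Type*} [Ring A] [Algebra F A]

local notation "C" => algebraMap F A

theorem invOf13 {x y : A} (h1 : x*y = 1) (h2 : y*x = 1) : Ring.inverse x = y :=
  Ring.inverse_unit ⟨x,y,h1,h2⟩

theorem invOfSq13 {x y : A} (h1 : x*y = 1) (h2 : y*x = 1) :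
    Ring.inverse (x^2) = y*y :=
  invOf13 (by rw [pow_two, mul_assoc, ← mul_assoc x y y, h1, one_mul, h1])
    (by rw [pow_two, mul_assoc, ← mul_assoc y x x, h2, one_mul, h2])

theorem unitL13 (fj fk : F) (tj tk : A) (hj : fj ≠ 0) (hk : fk ≠ 0)
    (hjj : tj*tj = 0) (hkk : tk*tk = 0) (hkj : tk*tj = -(tj*tk)) :
    (C fk * C (fj)⁻¹ + tj * tk * C ((fj^2)⁻¹)) *
      (C (fk⁻¹ * fj) - C ((fk^2)⁻¹) * (tj * tk)) = 1 := by
  have hjj' : ∀ x : A, tj*(tj*x) = 0 := fun x => by rw [← mul_assoc, hjj, zero_mul]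
  have hkk' : ∀ x : A, tk*(tk*x) = 0 := fun x => by rw [← mul_assoc, hkk, zero_mul]
  have hkj' : ∀ x : A, tk*(tj*x) = -(tj*(tk*x)) := fun x => by
    rw [← mul_assoc, hkj, neg_mul, mul_assoc]
  simp only [Algebra.algebraMap_eq_smul_one, mul_add, add_mul, mul_sub, sub_mul,
    smul_mul_assoc, mul_smul_comm, smul_smul, one_mul, mul_one, mul_assoc,
    hjj, hkk, hkj, hjj', hkk', hkj', smul_neg, neg_neg, mul_zero, zero_mul,
    smul_zero, mul_neg, neg_mul, add_zero, zero_add, neg_zero]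
  match_scalars
  all_goals try (ring_nf; field_simp)
  all_goals try field_simp
  all_goals ring

theorem unitR13 (fj fk : F) (tj tk : A) (hj : fj ≠ 0) (hk : fk ≠ 0)
    (hjj : tj*tj = 0) (hkk : tk*tk = 0) (hkj : tk*tj = -(tj*tk)) :
    (C (fk⁻¹ * fj) - C ((fk^2)⁻¹) * (tj * tk)) *
      (C fk * C (fj)⁻¹ + tj * tk * C ((fj^2)⁻¹)) = 1 := by
  have hjj' : ∀ x : A, tj*(tj*x) = 0 := fun x => by rw [← mul_assoc, hjj, zero_mul]
  have hkk' : ∀ x : A, tk*(tk*x) = 0 := fun x => by rw [← mul_assoc, hkk, zero_mul]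
  have hkj' : ∀ x : A, tk*(tj*x) = -(tj*(tk*x)) := fun x => by
    rw [← mul_assoc, hkj, neg_mul, mul_assoc]
  simp only [Algebra.algebraMap_eq_smul_one, mul_add, add_mul, mul_sub, sub_mul,
    smul_mul_assoc, mul_smul_comm, smul_smul, one_mul, mul_one, mul_assoc,
    hjj, hkk, hkj, hjj', hkk', hkj', smul_neg, neg_neg, mul_zero, zero_mul,
    smul_zero, mul_neg, neg_mul, add_zero, zero_add, neg_zero]
  match_scalars
  all_goals try (ring_nf; field_simp)
  all_goals try field_simp
  all_goals ring

theorem comp113 (fj fk fl : F) (tj tk tl : A) (hj : fj ≠ 0) (hk : fk ≠ 0)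
    (hjj : tj*tj = 0) (hkk : tk*tk = 0) (hll : tl*tl = 0)
    (hkj : tk*tj = -(tj*tk)) (hlj : tl*tj = -(tj*tl)) (hlk : tl*tk = -(tk*tl)) :
    (C fl * C (fj)⁻¹ + tj * tl * C ((fj^2)⁻¹)) *
        (C (fk⁻¹ * fj) - C ((fk^2)⁻¹) * (tj * tk)) +
      (tk * C (fj)⁻¹ - C fk * tj * C ((fj^2)⁻¹)) *
        (tl * C (fj)⁻¹ - C fl * tj * C ((fj^2)⁻¹)) *
        ((C (fk⁻¹ * fj) - C ((fk^2)⁻¹) * (tj * tk)) *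
          (C (fk⁻¹ * fj) - C ((fk^2)⁻¹) * (tj * tk))) =
      C fl * C (fk)⁻¹ + tk * tl * C ((fk^2)⁻¹) := by
  have hjj' : ∀ x : A, tj*(tj*x) = 0 := fun x => by rw [← mul_assoc, hjj, zero_mul]
  have hkk' : ∀ x : A, tk*(tk*x) = 0 := fun x => by rw [← mul_assoc, hkk, zero_mul]
  have hll' : ∀ x : A, tl*(tl*x) = 0 := fun x => by rw [← mul_assoc, hll, zero_mul]
  have hkj' : ∀ x : A, tk*(tj*x) = -(tj*(tk*x)) := fun x => by
    rw [← mul_assoc, hkj, neg_mul, mul_assoc]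
  have hlj' : ∀ x : A, tl*(tj*x) = -(tj*(tl*x)) := fun x => by
    rw [← mul_assoc, hlj, neg_mul, mul_assoc]
  have hlk' : ∀ x : A, tl*(tk*x) = -(tk*(tl*x)) := fun x => by
    rw [← mul_assoc, hlk, neg_mul, mul_assoc]
  simp only [Algebra.algebraMap_eq_smul_one, mul_add, add_mul, mul_sub, sub_mul,
    smul_mul_assoc, mul_smul_comm, smul_smul, one_mul, mul_one, mul_assoc,
    hjj, hkk, hll, hkj, hlj, hlk, hjj', hkk', hll', hkj', hlj', hlk',
    smul_neg, neg_neg, mul_zero, zero_mul,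
    smul_zero, mul_neg, neg_mul, add_zero, zero_add, neg_zero]
  match_scalars
  all_goals try (ring_nf; field_simp)
  all_goals try field_simp
  all_goals ring

theorem comp213 (fj fk fl : F) (tj tk tl : A) (hj : fj ≠ 0) (hk : fk ≠ 0)
    (hjj : tj*tj = 0) (hkk : tk*tk = 0) (hll : tl*tl = 0)
    (hkj : tk*tj = -(tj*tk)) (hlj : tl*tj = -(tj*tl)) (hlk : tl*tk = -(tk*tl)) :
    (tl * C (fj)⁻¹ - C fl * tj * C ((fj^2)⁻¹)) *
        (C (fk⁻¹ * fj) - C ((fk^2)⁻¹) * (tj * tk)) -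
      (C fl * C (fj)⁻¹ + tj * tl * C ((fj^2)⁻¹)) *
        (tk * C (fj)⁻¹ - C fk * tj * C ((fj^2)⁻¹)) *
        ((C (fk⁻¹ * fj) - C ((fk^2)⁻¹) * (tj * tk)) *
          (C (fk⁻¹ * fj) - C ((fk^2)⁻¹) * (tj * tk))) =
      tl * C (fk)⁻¹ - C fl * tk * C ((fk^2)⁻¹) := by
  have hjj' : ∀ x : A, tj*(tj*x) = 0 := fun x => by rw [← mul_assoc, hjj, zero_mul]
  have hkk' : ∀ x : A, tk*(tk*x) = 0 := fun x => by rw [← mul_assoc, hkk, zero_mul]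
  have hll' : ∀ x : A, tl*(tl*x) = 0 := fun x => by rw [← mul_assoc, hll, zero_mul]
  have hkj' : ∀ x : A, tk*(tj*x) = -(tj*(tk*x)) := fun x => by
    rw [← mul_assoc, hkj, neg_mul, mul_assoc]
  have hlj' : ∀ x : A, tl*(tj*x) = -(tj*(tl*x)) := fun x => by
    rw [← mul_assoc, hlj, neg_mul, mul_assoc]
  have hlk' : ∀ x : A, tl*(tk*x) = -(tk*(tl*x)) := fun x => by
    rw [← mul_assoc, hlk, neg_mul, mul_assoc]
  simp only [Algebra.algebraMap_eq_smul_one, mul_add, add_mul, mul_sub, sub_mul,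
    smul_mul_assoc, mul_smul_comm, smul_smul, one_mul, mul_one, mul_assoc,
    hjj, hkk, hll, hkj, hlj, hlk, hjj', hkk', hll', hkj', hlj', hlk',
    smul_neg, neg_neg, mul_zero, zero_mul,
    smul_zero, mul_neg, neg_mul, add_zero, zero_add, neg_zero]
  match_scalars
  all_goals try (ring_nf; field_simp)
  all_goals try field_simp
  all_goals ring

end Abstract13


noncomputable def f13g (n : ℕ) (i : Fin (n + 1)) : Fin (n + 1) → F13 n :=
  fun ℓ => if ℓ = i then 1 else algebraMap (MvPolynomial (Fin (n + 1)) ℂ) (F13 n) (X ℓ)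

theorem f13g_ne_zero (n : ℕ) (i ℓ : Fin (n + 1)) : f13g n i ℓ ≠ 0 := by
  unfold f13g
  split
  · exact one_ne_zero
  · simp [map_eq_zero_iff _ (IsFractionRing.injective (MvPolynomial (Fin (n + 1)) ℂ) (F13 n)),
      MvPolynomial.X_ne_zero]

theorem zgen_eq (n : ℕ) (i ℓ : Fin (n + 1)) :
    zgen n i ℓ = algebraMap (F13 n) (A13 n) (f13g n i ℓ) := by
  unfold zgen f13g c13
  split <;> simp

theorem θgen_sq (n : ℕ) (i a : Fin (n + 1)) : θgen n i a * θgen n i a = 0 := by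
  unfold θgen
  split
  · simp
  · exact ExteriorAlgebra.ι_sq_zero _

theorem θgen_swap (n : ℕ) (i a b : Fin (n + 1)) :
    θgen n i b * θgen n i a = -(θgen n i a * θgen n i b) := by
  unfold θgen
  split <;> split <;>
    first
      | simp
      | exact eq_neg_of_add_eq_zero_right (ExteriorAlgebra.ι_add_mul_swap _ _)

theorem hinv13 (n : ℕ) (g : F13 n) (hg : g ≠ 0) :
    Ring.inverse (algebraMap (F13 n) (A13 n) g) = algebraMap (F13 n) (A13 n) g⁻¹ :=
  invOf13 (by rw [← map_mul, mul_inv_cancel₀ hg, map_one])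
    (by rw [← map_mul, inv_mul_cancel₀ hg, map_one])

/-- The transition data of the Π-projective space `Pⁿ_Π` satisfies the
cocycle condition: the change of coordinates from chart `i` to chart `j` followed by the
change from chart `j` to chart `k` equals the change from chart `i` to chart `k`, as
identities in the Grassmann algebra over the field of rational functions. -/
theorem stmt13 (n : ℕ) (i j k : Fin (n + 1)) :
    tr13 n k (tr13 n j (zgen n i, θgen n i)) = tr13 n k (zgen n i, θgen n i) := by
  have hf := f13g_ne_zero n i
  have hz := zgen_eq n i
  have tsq := θgen_sq n i
  have tsw := θgen_swap n i
  set f := f13g n i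
  set t := θgen n i
  have hU1 := unitL13 (f j) (f k) (t j) (t k) (hf j) (hf k) (tsq j) (tsq k) (tsw j k)
  have hU2 := unitR13 (f j) (f k) (t j) (t k) (hf j) (hf k) (tsq j) (tsq k) (tsw j k)
  refine Prod.ext (funext fun ℓ => ?_) (funext fun ℓ => ?_)
  · show (tr13 n k (tr13 n j (zgen n i, t))).1 ℓ = (tr13 n k (zgen n i, t)).1 ℓ
    simp only [tr13, hz, ← map_pow, hinv13 n (f j) (hf j),
      hinv13 n (f j ^ 2) (pow_ne_zero _ (hf j)), hinv13 n (f k) (hf k),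
      hinv13 n (f k ^ 2) (pow_ne_zero _ (hf k))]
    rw [invOf13 hU1 hU2, invOfSq13 hU1 hU2]
    exact comp113 (f j) (f k) (f ℓ) (t j) (t k) (t ℓ) (hf j) (hf k)
      (tsq j) (tsq k) (tsq ℓ) (tsw j k) (tsw j ℓ) (tsw k ℓ)
  · show (tr13 n k (tr13 n j (zgen n i, t))).2 ℓ = (tr13 n k (zgen n i, t)).2 ℓ
    simp only [tr13, hz, ← map_pow, hinv13 n (f j) (hf j),
      hinv13 n (f j ^ 2) (pow_ne_zero _ (hf j)), hinv13 n (f k) (hf k),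
      hinv13 n (f k ^ 2) (pow_ne_zero _ (hf k))]
    rw [invOf13 hU1 hU2, invOfSq13 hU1 hU2]
    exact comp213 (f j) (f k) (f ℓ) (t j) (t k) (t ℓ) (hf j) (hf k)
      (tsq j) (tsq k) (tsq ℓ) (tsw j k) (tsw j ℓ) (tsw k ℓ)
end
end

section
/- Let A, B, C, D be the blocks (over a commutative ring containing the even part of a Grassmann algebra) given by: A lower-triangular n×n with A₁₁ = −1/z², A_{kk} = 1/z for k ≥ 2, A_{k1} = −w_k/z² − 2t₁t_k/z³ for k ≥ 2, and D lower-triangular with D₁₁ = −1/z², D_{kk} = 1/z for k ≥ 2, D_{k1} = −w_k/z² for k ≥ 2, with B, C odd matrices as in the super Jacobian of Pⁿ_Π on U₀ ∩ U₁ (B₁ⱼ = 0, B_{k1} = t_k/z², B_{kk} = −t₁/z² for k ≥ 2; C₁₁ = 2t₁/z³, C_{k1} = −t_k/z² + 2w_k t₁/z³, C_{kk} = −t₁/z² for k ≥ 2, all other entries zero). Then det(A)·det(D − C A⁻¹ B)⁻¹ = 1, i.e. the Berezinian of the block supermatrix (A B; C D) equals 1. -/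
set_option synthInstance.maxHeartbeats 1000000
set_option maxHeartbeats 1000000

open MvPolynomial

noncomputable section

variable (n : ℕ)

/-- The field `ℂ(z, w₂, …, w_n)` (variable `0` is `z`, variable `k ≥ 1` is `w_{k+1}`). -/
abbrev F14 (n : ℕ) : Type := FractionRing (MvPolynomial (Fin (n + 1)) ℂ)

/-- The Grassmann algebra over `ℂ(z, w₂,…,w_n)` with odd generators `t₁,…,t_n`. -/
abbrev A14 (n : ℕ) : Type := ExteriorAlgebra (F14 n) (Fin (n + 1) → F14 n)

noncomputable def c14 (f : F14 n) : A14 n := algebraMap (F14 n) (A14 n) f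
noncomputable def z14 : F14 n := algebraMap (MvPolynomial (Fin (n + 1)) ℂ) (F14 n) (X 0)
noncomputable def w14 (k : Fin (n + 1)) : F14 n := algebraMap (MvPolynomial (Fin (n + 1)) ℂ) (F14 n) (X k)
noncomputable def t14 (k : Fin (n + 1)) : A14 n := ExteriorAlgebra.ι (F14 n) (Pi.single k 1)

/-- Determinant of a square matrix over a (possibly noncommutative) ring, via the Leibniz
formula with products taken in the natural order of the index set.  For matrices whose
entries pairwise commute (such as matrices with entries in the even part of a Grassmann
algebra) this is the usual determinant. -/
noncomputable def ndet {m : ℕ} {R : Type*} [Ring R] (M : Matrix (Fin m) (Fin m) R) : R :=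
  ∑ σ : Equiv.Perm (Fin m),
    ((Equiv.Perm.sign σ : ℤ)) • (((List.finRange m).map fun i => M (σ i) i).prod)

/-- the block `A` of the super Jacobian of `Pⁿ_Π` on `U₀ ∩ U₁` (index `0 ↔ 1`) -/
noncomputable def blockA : Matrix (Fin (n + 1)) (Fin (n + 1)) (A14 n) := fun k l =>
  if l = 0 then
    (if k = 0 then c14 n (-(z14 n)⁻¹ ^ 2)
     else c14 n (-(w14 n k) * (z14 n)⁻¹ ^ 2) - c14 n (2 * (z14 n)⁻¹ ^ 3) * (t14 n 0 * t14 n k))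
  else if k = l then c14 n (z14 n)⁻¹ else 0

/-- the (odd) block `B` -/
noncomputable def blockB : Matrix (Fin (n + 1)) (Fin (n + 1)) (A14 n) := fun k l =>
  if k = 0 then 0
  else if l = 0 then c14 n ((z14 n)⁻¹ ^ 2) * t14 n k
  else if k = l then -(c14 n ((z14 n)⁻¹ ^ 2) * t14 n 0) else 0

/-- the (odd) block `C` -/
noncomputable def blockC : Matrix (Fin (n + 1)) (Fin (n + 1)) (A14 n) := fun k l =>
  if l = 0 then
    (if k = 0 then c14 n (2 * (z14 n)⁻¹ ^ 3) * t14 n 0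
     else -(c14 n ((z14 n)⁻¹ ^ 2) * t14 n k) + c14 n (2 * (w14 n k) * (z14 n)⁻¹ ^ 3) * t14 n 0)
  else if k = l then -(c14 n ((z14 n)⁻¹ ^ 2) * t14 n 0) else 0

/-- the block `D` -/
noncomputable def blockD : Matrix (Fin (n + 1)) (Fin (n + 1)) (A14 n) := fun k l =>
  if l = 0 then
    (if k = 0 then c14 n (-(z14 n)⁻¹ ^ 2) else c14 n (-(w14 n k) * (z14 n)⁻¹ ^ 2))
  else if k = l then c14 n (z14 n)⁻¹ else 0

section generic

variable {F R : Type*} [Field F] [Ring R] [Algebra F R] {m : ℕ}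

/-- For a matrix that vanishes off column `0` and the diagonal, `ndet` is the
ordered product of the diagonal. -/
lemma ndet_tri (M : Matrix (Fin (m + 1)) (Fin (m + 1)) R)
    (h : ∀ k l, l ≠ 0 → k ≠ l → M k l = 0) :
    ndet M = ((List.finRange (m + 1)).map fun i => M i i).prod := by
  unfold ndet
  rw [Finset.sum_eq_single 1]
  · simp
  · intro σ _ hσ
    have hex : ∃ i, i ≠ 0 ∧ σ i ≠ i := by
      by_contra hc
      push_neg at hc
      apply hσ
      have h0 : σ 0 = 0 := by
        by_contra h0
        exact h0 (σ.injective (hc (σ 0) h0))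
      ext i
      by_cases hi : i = 0
      · simp [hi, h0]
      · simp [hc i hi]
    obtain ⟨i, hi0, hii⟩ := hex
    have hmem : (0 : R) ∈ (List.finRange (m + 1)).map fun j => M (σ j) j := by
      simp only [List.mem_map]
      exact ⟨i, List.mem_finRange i, h _ _ hi0 hii⟩
    rw [List.prod_eq_zero hmem, smul_zero]
  · simp

variable (F R) in
noncomputable def gA (z : F) (w : Fin (m + 1) → F) (t : Fin (m + 1) → R) :
    Matrix (Fin (m + 1)) (Fin (m + 1)) R := fun k l =>
  if l = 0 then
    (if k = 0 then algebraMap F R (-z⁻¹ ^ 2)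
     else algebraMap F R (-(w k) * z⁻¹ ^ 2) - algebraMap F R (2 * z⁻¹ ^ 3) * (t 0 * t k))
  else if k = l then algebraMap F R z⁻¹ else 0

variable (F R) in
noncomputable def gB (z : F) (t : Fin (m + 1) → R) :
    Matrix (Fin (m + 1)) (Fin (m + 1)) R := fun k l =>
  if k = 0 then 0
  else if l = 0 then algebraMap F R (z⁻¹ ^ 2) * t k
  else if k = l then -(algebraMap F R (z⁻¹ ^ 2) * t 0) else 0

variable (F R) in
noncomputable def gC (z : F) (w : Fin (m + 1) → F) (t : Fin (m + 1) → R) :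
    Matrix (Fin (m + 1)) (Fin (m + 1)) R := fun k l =>
  if l = 0 then
    (if k = 0 then algebraMap F R (2 * z⁻¹ ^ 3) * t 0
     else -(algebraMap F R (z⁻¹ ^ 2) * t k) + algebraMap F R (2 * (w k) * z⁻¹ ^ 3) * t 0)
  else if k = l then -(algebraMap F R (z⁻¹ ^ 2) * t 0) else 0

variable (F R) in
noncomputable def gD (z : F) (w : Fin (m + 1) → F) :
    Matrix (Fin (m + 1)) (Fin (m + 1)) R := fun k l =>
  if l = 0 then
    (if k = 0 then algebraMap F R (-z⁻¹ ^ 2) else algebraMap F R (-(w k) * z⁻¹ ^ 2))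
  else if k = l then algebraMap F R z⁻¹ else 0

variable (F R) in
noncomputable def gAinv (z : F) (w : Fin (m + 1) → F) (t : Fin (m + 1) → R) :
    Matrix (Fin (m + 1)) (Fin (m + 1)) R := fun k l =>
  if l = 0 then
    (if k = 0 then algebraMap F R (-(z ^ 2)) else algebraMap F R (z ^ 3) * gA F R z w t k 0)
  else if k = l then algebraMap F R z else 0

lemma gA_mul_gAinv (z : F) (w : Fin (m + 1) → F) (t : Fin (m + 1) → R) (hz : z ≠ 0) :
    gA F R z w t * gAinv F R z w t = 1 := by
  ext k l
  rw [Matrix.mul_apply, Matrix.one_apply]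
  by_cases hl : l = 0
  · subst hl
    by_cases hk : k = 0
    · subst hk
      rw [Finset.sum_eq_single 0]
      · have hA00 : gA F R z w t 0 0 = algebraMap F R (-z⁻¹ ^ 2) := by simp [gA]
        have h00 : gAinv F R z w t 0 0 = algebraMap F R (-(z ^ 2)) := by simp [gAinv]
        rw [if_pos rfl, hA00, h00, ← map_mul, neg_mul_neg, ← mul_pow,
          inv_mul_cancel₀ hz, one_pow, map_one]
      · intro b _ hb
        have : gA F R z w t 0 b = 0 := by
          simp [gA, hb, (Ne.symm hb : (0 : Fin (m + 1)) ≠ b)]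
        rw [this, zero_mul]
      · simp
    · have hsum : ∑ p, gA F R z w t k p * gAinv F R z w t p 0
          = ∑ p ∈ ({0, k} : Finset (Fin (m + 1))), gA F R z w t k p * gAinv F R z w t p 0 := by
        refine (Finset.sum_subset (Finset.subset_univ _) ?_).symm
        intro p _ hp
        simp only [Finset.mem_insert, Finset.mem_singleton, not_or] at hp
        have : gA F R z w t k p = 0 := by
          simp [gA, hp.1, (Ne.symm hp.2 : k ≠ p)]
        rw [this, zero_mul]
      rw [hsum, Finset.sum_pair (Ne.symm hk)]
      have h00 : gAinv F R z w t 0 0 = algebraMap F R (-(z ^ 2)) := by simp [gAinv]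
      have hk0 : gAinv F R z w t k 0 = algebraMap F R (z ^ 3) * gA F R z w t k 0 := by
        simp [gAinv, hk]
      have hAkk : gA F R z w t k k = algebraMap F R z⁻¹ := by simp [gA, hk]
      have e3 : z⁻¹ * z ^ 3 = z ^ 2 := by
        rw [pow_succ', ← mul_assoc, inv_mul_cancel₀ hz, one_mul]
      rw [if_neg hk, h00, hk0, hAkk, ← mul_assoc, ← map_mul, e3,
        Algebra.commutes (z ^ 2) (gA F R z w t k 0),
        ← mul_add, ← map_add, neg_add_cancel, map_zero, mul_zero]
  · have key : ∀ p, gA F R z w t k p * gAinv F R z w t p l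
        = if p = l then gA F R z w t k l * algebraMap F R z else 0 := by
      intro p
      by_cases hp : p = l
      · subst hp; simp [gAinv, hl]
      · simp [gAinv, hl, hp]
    rw [Finset.sum_congr rfl fun p _ => key p, Finset.sum_ite_eq' Finset.univ l]
    simp only [Finset.mem_univ, if_true]
    by_cases hk : k = l
    · subst hk
      have : gA F R z w t k k = algebraMap F R z⁻¹ := by simp [gA, hl]
      rw [this, ← map_mul, inv_mul_cancel₀ hz, map_one, if_pos rfl]
    · have : gA F R z w t k l = 0 := by simp [gA, hl, hk]
      rw [this, zero_mul, if_neg hk]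

lemma mul_gAinv_col (M : Matrix (Fin (m + 1)) (Fin (m + 1)) R)
    (z : F) (w : Fin (m + 1) → F) (t : Fin (m + 1) → R)
    (k l : Fin (m + 1)) (hl : l ≠ 0) :
    (M * gAinv F R z w t) k l = M k l * algebraMap F R z := by
  rw [Matrix.mul_apply]
  have key : ∀ p, M k p * gAinv F R z w t p l
      = if p = l then M k l * algebraMap F R z else 0 := by
    intro p
    by_cases hp : p = l
    · subst hp; simp [gAinv, hl]
    · simp [gAinv, hl, hp]
  rw [Finset.sum_congr rfl fun p _ => key p, Finset.sum_ite_eq' Finset.univ l]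
  simp

lemma gB_col (z : F) (t : Fin (m + 1) → R) (q l : Fin (m + 1)) (hl : l ≠ 0) :
    gB F R z t q l = if q = l then -(algebraMap F R (z⁻¹ ^ 2) * t 0) else 0 := by
  by_cases hq : q = l
  · subst hq; simp [gB, hl]
  · by_cases hq0 : q = 0
    · subst hq0
      simp [gB, (Ne.symm hl : (0 : Fin (m + 1)) ≠ l), hq]
    · simp [gB, hq0, hq, hl]

lemma gsandwich (a b : F) (x : R) (hx : x * x = 0) :
    (algebraMap F R a * x) * algebraMap F R b * (algebraMap F R a * x) = 0 := by
  have h1 : x * algebraMap F R b = algebraMap F R b * x := (Algebra.commutes b x).symm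
  have h2 : x * algebraMap F R a = algebraMap F R a * x := (Algebra.commutes a x).symm
  calc (algebraMap F R a * x) * algebraMap F R b * (algebraMap F R a * x)
      = algebraMap F R a * (x * algebraMap F R b) * (algebraMap F R a * x) := by
        simp only [mul_assoc]
    _ = algebraMap F R a * (algebraMap F R b * x) * (algebraMap F R a * x) := by rw [h1]
    _ = (algebraMap F R a * algebraMap F R b) * ((x * algebraMap F R a) * x) := by
        simp only [mul_assoc]
    _ = (algebraMap F R a * algebraMap F R b) * ((algebraMap F R a * x) * x) := by rw [h2]
    _ = (algebraMap F R a * algebraMap F R b * algebraMap F R a) * (x * x) := by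
        simp only [mul_assoc]
    _ = 0 := by rw [hx, mul_zero]

lemma gmain (z : F) (w : Fin (m + 1) → F) (t : Fin (m + 1) → R)
    (hz : z ≠ 0) (ht : t 0 * t 0 = 0)
    (Ainv : Matrix (Fin (m + 1)) (Fin (m + 1)) R) (h₂ : Ainv * gA F R z w t = 1) :
    ndet (gA F R z w t) *
      Ring.inverse (ndet (gD F R z w - gC F R z w t * Ainv * gB F R z t)) = 1 := by
  have hAinv : Ainv = gAinv F R z w t := by
    calc Ainv = Ainv * (gA F R z w t * gAinv F R z w t) := by
          rw [gA_mul_gAinv z w t hz, mul_one]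
      _ = Ainv * gA F R z w t * gAinv F R z w t := by rw [mul_assoc]
      _ = gAinv F R z w t := by rw [h₂, one_mul]
  subst hAinv
  have hAoff : ∀ k l : Fin (m + 1), l ≠ 0 → k ≠ l → gA F R z w t k l = 0 := by
    intro k l hl hk; simp [gA, hl, hk]
  have hMoff : ∀ k l : Fin (m + 1), l ≠ 0 → k ≠ l →
      (gD F R z w - gC F R z w t * gAinv F R z w t * gB F R z t) k l = 0 := by
    intro k l hl hk
    have hD : gD F R z w k l = 0 := by simp [gD, hl, hk]
    have hCE : (gC F R z w t * gAinv F R z w t) k l = 0 := by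
      rw [mul_gAinv_col _ _ _ _ _ _ hl]
      have : gC F R z w t k l = 0 := by simp [gC, hl, hk]
      rw [this, zero_mul]
    have hP : (gC F R z w t * gAinv F R z w t * gB F R z t) k l = 0 := by
      rw [Matrix.mul_apply]
      apply Finset.sum_eq_zero
      intro q _
      rw [gB_col z t q l hl]
      by_cases hq : q = l
      · subst hq; rw [if_pos rfl, hCE, zero_mul]
      · rw [if_neg hq, mul_zero]
    rw [Matrix.sub_apply, hD, hP, sub_zero]
  have hMdiag : ∀ k : Fin (m + 1),
      (gD F R z w - gC F R z w t * gAinv F R z w t * gB F R z t) k k = gA F R z w t k k := by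
    intro k
    by_cases hk : k = 0
    · subst hk
      have hP : (gC F R z w t * gAinv F R z w t * gB F R z t) 0 0 = 0 := by
        rw [Matrix.mul_apply]
        apply Finset.sum_eq_zero
        intro q _
        by_cases hq : q = 0
        · subst hq
          have : gB F R z t 0 0 = 0 := by simp [gB]
          rw [this, mul_zero]
        · have hCE : (gC F R z w t * gAinv F R z w t) 0 q = 0 := by
            rw [mul_gAinv_col _ _ _ _ _ _ hq]
            have : gC F R z w t 0 q = 0 := by
              simp [gC, hq, (Ne.symm hq : (0 : Fin (m + 1)) ≠ q)]
            rw [this, zero_mul]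
          rw [hCE, zero_mul]
      rw [Matrix.sub_apply, hP, sub_zero]
      simp [gD, gA]
    · have hCE : (gC F R z w t * gAinv F R z w t) k k
          = gC F R z w t k k * algebraMap F R z :=
        mul_gAinv_col _ _ _ _ _ _ hk
      have hCkk : gC F R z w t k k = -(algebraMap F R (z⁻¹ ^ 2) * t 0) := by
        simp [gC, hk]
      have hP : (gC F R z w t * gAinv F R z w t * gB F R z t) k k = 0 := by
        rw [Matrix.mul_apply]
        apply Finset.sum_eq_zero
        intro q _
        rw [gB_col z t q k hk]
        by_cases hq : q = k
        · subst hq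
          rw [if_pos rfl, hCE, hCkk, neg_mul, neg_mul_neg, gsandwich _ _ _ ht]
        · rw [if_neg hq, mul_zero]
      rw [Matrix.sub_apply, hP, sub_zero]
      simp [gD, gA, hk]
  rw [ndet_tri (gA F R z w t) hAoff,
    ndet_tri (gD F R z w - gC F R z w t * gAinv F R z w t * gB F R z t) hMoff,
    List.map_congr_left (fun i _ => hMdiag i)]
  apply Ring.mul_inverse_cancel
  apply List.prod_isUnit
  intro x hx
  simp only [List.mem_map] at hx
  obtain ⟨i, -, rfl⟩ := hx
  by_cases hi : i = 0
  · subst hi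
    have hA00 : gA F R z w t 0 0 = algebraMap F R (-z⁻¹ ^ 2) := by simp [gA]
    rw [hA00]
    exact (isUnit_iff_ne_zero.mpr
      (neg_ne_zero.mpr (pow_ne_zero 2 (inv_ne_zero hz)))).map (algebraMap F R)
  · have hAii : gA F R z w t i i = algebraMap F R z⁻¹ := by simp [gA, hi]
    rw [hAii]
    exact (isUnit_iff_ne_zero.mpr (inv_ne_zero hz)).map (algebraMap F R)

end generic


lemma z14_ne_zero (n : ℕ) : z14 n ≠ 0 := by
  unfold z14
  intro h
  exact MvPolynomial.X_ne_zero (R := ℂ) 0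
    ((IsFractionRing.to_map_eq_zero_iff (K := F14 n)).mp h)

/-- With `A, B, C, D` the blocks of the super Jacobian of `Pⁿ_Π` on
`U₀ ∩ U₁` as above, one has `det(A)·det(D − C A⁻¹ B)⁻¹ = 1`, i.e. the Berezinian of the
block supermatrix `(A B; C D)` equals `1`. -/
theorem stmt14 (n : ℕ) (Ainv : Matrix (Fin (n + 1)) (Fin (n + 1)) (A14 n))
    (h₁ : blockA n * Ainv = 1) (h₂ : Ainv * blockA n = 1) :
    ndet (blockA n) *
      Ring.inverse (ndet (blockD n - blockC n * Ainv * blockB n)) = 1 := by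
  have ht : t14 n 0 * t14 n 0 = 0 := ExteriorAlgebra.ι_sq_zero _
  exact gmain (F := F14 n) (R := A14 n) (z14 n) (w14 n) (t14 n) (z14_ne_zero n) ht Ainv h₂
end
end

section
/- In the Grassmann algebra over ℂ(x₁₁, y₁₁, x₂₁, y₂₁) with odd generators θ₁₁, θ₂₁, ξ₁₁, ξ₂₁, define the transition maps of G_Π(2,4) on U₁ ∩ U₂ by: x₁₂ = −x₁₁/y₁₁ − θ₁₁ξ₁₁/y₁₁², y₁₂ = 1/y₁₁, x₂₂ = x₂₁ − x₁₁y₂₁/y₁₁ + θ₁₁ξ₂₁/y₁₁ − (x₁₁/y₁₁²)ξ₁₁ξ₂₁ − (y₂₁/y₁₁²)θ₁₁ξ₁₁, y₂₂ = y₂₁/y₁₁ + ξ₁₁ξ₂₁/y₁₁², θ₁₂ = −θ₁₁/y₁₁ + (x₁₁/y₁₁²)ξ₁₁, ξ₁₂ = −ξ₁₁/y₁₁², θ₂₂ = θ₂₁ − (y₂₁/y₁₁)θ₁₁ − (x₁₁/y₁₁)ξ₂₁ + (x₁₁y₂₁/y₁₁²)ξ₁₁ − θ₁₁ξ₁₁ξ₂₁/y₁₁²,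 ξ₂₂ = ξ₂₁/y₁₁ − (y₂₁/y₁₁²)ξ₁₁. Then these formulas are obtained from row reduction: the 4×8 supermatrix Z_{U₁} with rows (1,0,x₁₁,x₂₁|0,0,θ₁₁,θ₂₁), (0,1,y₁₁,y₂₁|0,0,ξ₁₁,ξ₂₁), (0,0,−θ₁₁,−θ₂₁|1,0,x₁₁,x₂₁), (0,0,−ξ₁₁,−ξ₂₁|0,1,y₁₁,y₂₁), when left-multiplied by the inverse of its 4×4 submatrix formed by columns 1,3,5,7, yields the supermatrix Z_{U₂} with rows (1,x₁₂,0,x₂₂|0,θ₁₂,0,θ₂₂), (0,y₁₂,1,y₂₂|0,ξ₁₂,0,ξ₂₂), (0,−θ₁₂,0,−θ₂₂|1,x₁₂,0,x₂₂), (0,−ξ₁₂,0,−ξ₂₂|0,y₁₂,1,y₂₂). -/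
set_option synthInstance.maxHeartbeats 1000000
set_option maxHeartbeats 1000000

open MvPolynomial

noncomputable section

/-- The field `ℂ(x₁₁, y₁₁, x₂₁, y₂₁)`. -/
abbrev F17 : Type := FractionRing (MvPolynomial (Fin 4) ℂ)

/-- The Grassmann algebra `ℂ(x₁₁,y₁₁,x₂₁,y₂₁) ⊗ Λ[θ₁₁,θ₂₁,ξ₁₁,ξ₂₁]`. -/
abbrev A17 : Type := ExteriorAlgebra F17 (Fin 4 → F17)

noncomputable def c17 (f : F17) : A17 := algebraMap F17 A17 f
noncomputable def xv : F17 := algebraMap (MvPolynomial (Fin 4) ℂ) F17 (X 0)  -- x₁₁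
noncomputable def yv : F17 := algebraMap (MvPolynomial (Fin 4) ℂ) F17 (X 1)  -- y₁₁
noncomputable def xv' : F17 := algebraMap (MvPolynomial (Fin 4) ℂ) F17 (X 2) -- x₂₁
noncomputable def yv' : F17 := algebraMap (MvPolynomial (Fin 4) ℂ) F17 (X 3) -- y₂₁
noncomputable def th1 : A17 := ExteriorAlgebra.ι F17 (Pi.single (0 : Fin 4) 1)  -- θ₁₁
noncomputable def th2 : A17 := ExteriorAlgebra.ι F17 (Pi.single (1 : Fin 4) 1)  -- θ₂₁
noncomputable def xi1 : A17 := ExteriorAlgebra.ι F17 (Pi.single (2 : Fin 4) 1)  -- ξ₁₁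
noncomputable def xi2 : A17 := ExteriorAlgebra.ι F17 (Pi.single (3 : Fin 4) 1)  -- ξ₂₁

/-- the super big cell `Z_{U₁}` of `G_Π(2,4)` -/
noncomputable def ZU1 : Matrix (Fin 4) (Fin 8) A17 :=
  !![1, 0, c17 xv, c17 xv', 0, 0, th1, th2;
     0, 1, c17 yv, c17 yv', 0, 0, xi1, xi2;
     0, 0, -th1, -th2, 1, 0, c17 xv, c17 xv';
     0, 0, -xi1, -xi2, 0, 1, c17 yv, c17 yv']

/-- the 4×4 submatrix of `Z_{U₁}` formed by columns 1,3,5,7 -/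
noncomputable def M17 : Matrix (Fin 4) (Fin 4) A17 :=
  !![1, c17 xv, 0, th1;
     0, c17 yv, 0, xi1;
     0, -th1, 1, c17 xv;
     0, -xi1, 0, c17 yv]

-- the transition functions of `G_Π(2,4)` on `U₁ ∩ U₂`
noncomputable def x12' : A17 := c17 (-(xv / yv)) - c17 (yv⁻¹ ^ 2) * (th1 * xi1)
noncomputable def y12' : A17 := c17 yv⁻¹
noncomputable def x22' : A17 :=
  c17 (xv' - xv * yv' / yv) + c17 yv⁻¹ * (th1 * xi2)
    - c17 (xv * yv⁻¹ ^ 2) * (xi1 * xi2) - c17 (yv' * yv⁻¹ ^ 2) * (th1 * xi1)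
noncomputable def y22' : A17 := c17 (yv' / yv) + c17 (yv⁻¹ ^ 2) * (xi1 * xi2)
noncomputable def θ12' : A17 := -(c17 yv⁻¹ * th1) + c17 (xv * yv⁻¹ ^ 2) * xi1
noncomputable def ξ12' : A17 := -(c17 (yv⁻¹ ^ 2) * xi1)
noncomputable def θ22' : A17 :=
  th2 - c17 (yv' / yv) * th1 - c17 (xv / yv) * xi2 + c17 (xv * yv' * yv⁻¹ ^ 2) * xi1
    - c17 (yv⁻¹ ^ 2) * (th1 * xi1 * xi2)
noncomputable def ξ22' : A17 := c17 yv⁻¹ * xi2 - c17 (yv' * yv⁻¹ ^ 2) * xi1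

/-- the super big cell `Z_{U₂}` of `G_Π(2,4)`, with entries given by the transition
functions above -/
noncomputable def ZU2 : Matrix (Fin 4) (Fin 8) A17 :=
  !![1, x12', 0, x22', 0, θ12', 0, θ22';
     0, y12', 1, y22', 0, ξ12', 0, ξ22';
     0, -θ12', 0, -θ22', 1, x12', 0, x22';
     0, -ξ12', 0, -ξ22', 0, y12', 1, y22']

set_option maxHeartbeats 4000000

@[simp] lemma Matrix.cons_val_five' {m : ℕ} {α : Type*} (x : α) (u : Fin (m+5) → α) :
    Matrix.vecCons x u 5 = Matrix.vecHead (Matrix.vecTail (Matrix.vecTail (Matrix.vecTail (Matrix.vecTail u)))) := rfl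
@[simp] lemma Matrix.cons_val_six' {m : ℕ} {α : Type*} (x : α) (u : Fin (m+6) → α) :
    Matrix.vecCons x u 6 = Matrix.vecHead (Matrix.vecTail (Matrix.vecTail (Matrix.vecTail (Matrix.vecTail (Matrix.vecTail u))))) := rfl
@[simp] lemma Matrix.cons_val_seven' {m : ℕ} {α : Type*} (x : α) (u : Fin (m+7) → α) :
    Matrix.vecCons x u 7 = Matrix.vecHead (Matrix.vecTail (Matrix.vecTail (Matrix.vecTail (Matrix.vecTail (Matrix.vecTail (Matrix.vecTail u)))))) := rfl


noncomputable section GenericDev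
variable {K : Type*} [Field K]

local notation "E" => ExteriorAlgebra K (Fin 4 → K)

variable (K) in
def cg (f : K) : E := algebraMap K E f
variable (K) in
def g1 : E := ExteriorAlgebra.ι K (Pi.single (0 : Fin 4) 1)
variable (K) in
def g2 : E := ExteriorAlgebra.ι K (Pi.single (1 : Fin 4) 1)
variable (K) in
def g3 : E := ExteriorAlgebra.ι K (Pi.single (2 : Fin 4) 1)
variable (K) in
def g4 : E := ExteriorAlgebra.ι K (Pi.single (3 : Fin 4) 1)

-- scalar-commutation
lemma gc (v : Fin 4 → K) (f : K) (z : E) :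
    ExteriorAlgebra.ι K v * (cg K f * z) = cg K f * (ExteriorAlgebra.ι K v * z) := by
  rw [← mul_assoc, cg, ← Algebra.commutes f _, mul_assoc]
lemma gc0 (v : Fin 4 → K) (f : K) :
    ExteriorAlgebra.ι K v * cg K f = cg K f * ExteriorAlgebra.ι K v :=
  (Algebra.commutes f _).symm
lemma c_mul (f f' : K) : cg K f * cg K f' = cg K (f * f') := (map_mul _ _ _).symm
lemma c_mul' (f f' : K) (z : E) : cg K f * (cg K f' * z) = cg K (f * f') * z := by
  rw [← mul_assoc, c_mul]


lemma c_sub (f f' : K) : cg K (f - f') = cg K f - cg K f' := map_sub _ _ _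
lemma c_neg (f : K) : cg K (-f) = -cg K f := map_neg _ _
lemma c_one : cg K (1 : K) = 1 := map_one _

lemma g1c (f : K) : g1 K * cg K f = cg K f * g1 K := gc0 _ _
lemma g2c (f : K) : g2 K * cg K f = cg K f * g2 K := gc0 _ _
lemma g3c (f : K) : g3 K * cg K f = cg K f * g3 K := gc0 _ _
lemma g4c (f : K) : g4 K * cg K f = cg K f * g4 K := gc0 _ _
lemma g1c' (f : K) (z : E) : g1 K * (cg K f * z) = cg K f * (g1 K * z) := gc _ _ _
lemma g2c' (f : K) (z : E) : g2 K * (cg K f * z) = cg K f * (g2 K * z) := gc _ _ _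
lemma g3c' (f : K) (z : E) : g3 K * (cg K f * z) = cg K f * (g3 K * z) := gc _ _ _
lemma g4c' (f : K) (z : E) : g4 K * (cg K f * z) = cg K f * (g4 K * z) := gc _ _ _

lemma g1_sq : g1 K * g1 K = 0 := ExteriorAlgebra.ι_sq_zero _
lemma g2_sq : g2 K * g2 K = 0 := ExteriorAlgebra.ι_sq_zero _
lemma g3_sq : g3 K * g3 K = 0 := ExteriorAlgebra.ι_sq_zero _
lemma g4_sq : g4 K * g4 K = 0 := ExteriorAlgebra.ι_sq_zero _
lemma g1_sq' (z : E) : g1 K * (g1 K * z) = 0 := by rw [← mul_assoc, g1_sq, zero_mul]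
lemma g2_sq' (z : E) : g2 K * (g2 K * z) = 0 := by rw [← mul_assoc, g2_sq, zero_mul]
lemma g3_sq' (z : E) : g3 K * (g3 K * z) = 0 := by rw [← mul_assoc, g3_sq, zero_mul]
lemma g4_sq' (z : E) : g4 K * (g4 K * z) = 0 := by rw [← mul_assoc, g4_sq, zero_mul]

lemma gswap (x y : Fin 4 → K) :
    ExteriorAlgebra.ι K y * ExteriorAlgebra.ι K x
      = -(ExteriorAlgebra.ι K x * ExteriorAlgebra.ι K y) :=
  eq_neg_of_add_eq_zero_right (ExteriorAlgebra.ι_add_mul_swap x y)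
lemma g21 : g2 K * g1 K = -(g1 K * g2 K) := gswap _ _
lemma g31 : g3 K * g1 K = -(g1 K * g3 K) := gswap _ _
lemma g32 : g3 K * g2 K = -(g2 K * g3 K) := gswap _ _
lemma g41 : g4 K * g1 K = -(g1 K * g4 K) := gswap _ _
lemma g42 : g4 K * g2 K = -(g2 K * g4 K) := gswap _ _
lemma g43 : g4 K * g3 K = -(g3 K * g4 K) := gswap _ _
lemma g21' (z : E) : g2 K * (g1 K * z) = -(g1 K * (g2 K * z)) := by
  rw [← mul_assoc, g21, neg_mul, mul_assoc]
lemma g31' (z : E) : g3 K * (g1 K * z) = -(g1 K * (g3 K * z)) := by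
  rw [← mul_assoc, g31, neg_mul, mul_assoc]
lemma g32' (z : E) : g3 K * (g2 K * z) = -(g2 K * (g3 K * z)) := by
  rw [← mul_assoc, g32, neg_mul, mul_assoc]
lemma g41' (z : E) : g4 K * (g1 K * z) = -(g1 K * (g4 K * z)) := by
  rw [← mul_assoc, g41, neg_mul, mul_assoc]
lemma g42' (z : E) : g4 K * (g2 K * z) = -(g2 K * (g4 K * z)) := by
  rw [← mul_assoc, g42, neg_mul, mul_assoc]
lemma g43' (z : E) : g4 K * (g3 K * z) = -(g3 K * (g4 K * z)) := by
  rw [← mul_assoc, g43, neg_mul, mul_assoc]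

lemma assoc134 : g1 K * g3 K * g4 K = g1 K * (g3 K * g4 K) := mul_assoc _ _ _

-- generic matrices: a=x11, b=y11, a'=x21, b'=y21; g1=θ11, g2=θ21, g3=ξ11, g4=ξ21
variable (K) in
def Z1g (a b a' b' : K) : Matrix (Fin 4) (Fin 8) E :=
  !![1, 0, cg K a, cg K a', 0, 0, g1 K, g2 K;
     0, 1, cg K b, cg K b', 0, 0, g3 K, g4 K;
     0, 0, -g1 K, -g2 K, 1, 0, cg K a, cg K a';
     0, 0, -g3 K, -g4 K, 0, 1, cg K b, cg K b']

variable (K) in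
def Mg (a b : K) : Matrix (Fin 4) (Fin 4) E :=
  !![1, cg K a, 0, g1 K;
     0, cg K b, 0, g3 K;
     0, -g1 K, 1, cg K a;
     0, -g3 K, 0, cg K b]

variable (K) in
def X12 (a b : K) : E := cg K (-(a / b)) - cg K (b⁻¹ ^ 2) * (g1 K * g3 K)
variable (K) in
def Y12 (b : K) : E := cg K b⁻¹
variable (K) in
def X22 (a b a' b' : K) : E :=
  cg K (a' - a * b' / b) + cg K b⁻¹ * (g1 K * g4 K)
    - cg K (a * b⁻¹ ^ 2) * (g3 K * g4 K) - cg K (b' * b⁻¹ ^ 2) * (g1 K * g3 K)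
variable (K) in
def Y22 (b b' : K) : E := cg K (b' / b) + cg K (b⁻¹ ^ 2) * (g3 K * g4 K)
variable (K) in
def Θ12 (a b : K) : E := -(cg K b⁻¹ * g1 K) + cg K (a * b⁻¹ ^ 2) * g3 K
variable (K) in
def Ξ12 (b : K) : E := -(cg K (b⁻¹ ^ 2) * g3 K)
variable (K) in
def Θ22 (a b a' b' : K) : E :=
  g2 K - cg K (b' / b) * g1 K - cg K (a / b) * g4 K + cg K (a * b' * b⁻¹ ^ 2) * g3 K
    - cg K (b⁻¹ ^ 2) * (g1 K * g3 K * g4 K)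
variable (K) in
def Ξ22 (b b' : K) : E := cg K b⁻¹ * g4 K - cg K (b' * b⁻¹ ^ 2) * g3 K

variable (K) in
def Z2g (a b a' b' : K) : Matrix (Fin 4) (Fin 8) E :=
  !![1, X12 K a b, 0, X22 K a b a' b', 0, Θ12 K a b, 0, Θ22 K a b a' b';
     0, Y12 K b, 1, Y22 K b b', 0, Ξ12 K b, 0, Ξ22 K b b';
     0, -Θ12 K a b, 0, -Θ22 K a b a' b', 1, X12 K a b, 0, X22 K a b a' b';
     0, -Ξ12 K b, 0, -Ξ22 K b b', 0, Y12 K b, 1, Y22 K b b']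

theorem genKey (a b a' b' : K) (hb : b ≠ 0) :
    Mg K a b * Z2g K a b a' b' = Z1g K a b a' b' := by
  have h1 : b * b⁻¹ = 1 := mul_inv_cancel₀ hb
  have h3 : b * (b' / b) = b' := by field_simp
  have h4 : a * b⁻¹ = a / b := (div_eq_mul_inv a b).symm
  have h5 : b * (b ^ 2)⁻¹ = b⁻¹ := by
    rw [sq, mul_inv, ← mul_assoc, h1, one_mul]
  have h6 : b * (b' * (b ^ 2)⁻¹) = b' / b := by
    field_simp
  have h7 : a * (b' * (b ^ 2)⁻¹) = a * b' * (b ^ 2)⁻¹ := (mul_assoc _ _ _).symm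
  ext i j
  fin_cases i <;> fin_cases j <;>
    simp [Matrix.mul_apply, Fin.sum_univ_four, Mg, Z1g, Z2g, X12, Y12, X22, Y22,
      Θ12, Ξ12, Θ22, Ξ22, assoc134,
      mul_add, mul_sub, mul_neg, neg_mul, add_mul, sub_mul,
      c_mul, c_mul', g1c, g2c, g3c, g4c, g1c', g2c', g3c', g4c',
      g1_sq, g2_sq, g3_sq, g4_sq, g1_sq', g2_sq', g3_sq', g4_sq',
      g21, g31, g32, g41, g42, g43, g21', g31', g32', g41', g42', g43',
      h1, h3, h5, h6, Matrix.vecHead, Matrix.vecTail] <;>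
    (try simp only [c_sub, c_neg, c_one, mul_div_assoc, h4, h7, one_mul, neg_neg]) <;>
    (try abel)
end GenericDev


lemma yv_ne : yv ≠ 0 := fun h => MvPolynomial.X_ne_zero (1 : Fin 4) <|
  IsFractionRing.injective (MvPolynomial (Fin 4) ℂ) F17 (by simpa [yv] using h)

lemma key17 : M17 * ZU2 = ZU1 := genKey xv yv xv' yv' yv_ne

/-- The transition formulas of `G_Π(2,4)` on `U₁ ∩ U₂` are obtained from
row reduction: left-multiplying the super big cell `Z_{U₁}` by the inverse of its 4×4
submatrix formed by columns 1,3,5,7 yields the super big cell `Z_{U₂}`. -/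
theorem stmt17 (Minv : Matrix (Fin 4) (Fin 4) A17)
    (h₁ : M17 * Minv = 1) (h₂ : Minv * M17 = 1) :
    Minv * ZU1 = ZU2 := by
  calc Minv * ZU1 = Minv * (M17 * ZU2) := by rw [key17]
    _ = Minv * M17 * ZU2 := by rw [Matrix.mul_assoc]
    _ = ZU2 := by rw [h₂, Matrix.one_mul]
end
end
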